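/- arXiv:2012.08154 — 7 statements merged into one kernel-verified Lean document; each statement's English description precedes it below -/
import Mathlib

section
/- Define $h(W) = \mathrm{tr}(\exp(W \odot W)) - d$ for real $d \times d$ matrices $W$, where $\odot$ is the entrywise (Hadamard) product. Then the gradient of $h$ is given by $\nabla h(W) = 2\, W \odot (\exp(W \odot W))^\top$, i.e., $\frac{\partial h}{\partial W_{ij}} = 2 W_{ij} (\exp(W\odot W))_{ji}$. -/
open Matrix

attribute [local instance] Matrix.linftyOpNormedAddCommGroup Matrix.linftyOpNormedRing
  Matrix.linftyOpNormedAlgebra Matrix.linftyOpNormedSpace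

namespace Stmt3Aux

variable {d : ℕ}

/-- trace as a continuous linear map -/
noncomputable def traceCLM (d : ℕ) : Matrix (Fin d) (Fin d) ℝ →L[ℝ] ℝ :=
  LinearMap.toContinuousLinearMap (Matrix.traceLinearMap (Fin d) ℝ ℝ)

@[simp] lemma traceCLM_apply (X : Matrix (Fin d) (Fin d) ℝ) : traceCLM d X = X.trace := rfl

lemma entry_norm_le (X : Matrix (Fin d) (Fin d) ℝ) (k l : Fin d) : ‖X k l‖ ≤ ‖X‖ := by
  have h1 : ‖X k l‖₊ ≤ ∑ j', ‖X k j'‖₊ :=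
    Finset.single_le_sum (f := fun j' => ‖X k j'‖₊) (fun _ _ => zero_le) (Finset.mem_univ l)
  have h2 : (∑ j', ‖X k j'‖₊) ≤ ‖X‖₊ := by
    rw [Matrix.linfty_opNNNorm_def]
    exact Finset.le_sup (f := fun i' => ∑ j', ‖X i' j'‖₊) (Finset.mem_univ k)
  exact_mod_cast h1.trans h2

lemma trace_norm_le (X : Matrix (Fin d) (Fin d) ℝ) : ‖X.trace‖ ≤ d * ‖X‖ := by
  have h : X.trace = ∑ k : Fin d, X k k := rfl
  rw [h]
  calc ‖∑ k : Fin d, X k k‖ ≤ ∑ k : Fin d, ‖X k k‖ := norm_sum_le _ _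
    _ ≤ ∑ _k : Fin d, ‖X‖ := Finset.sum_le_sum fun k _ => entry_norm_le X k k
    _ = d * ‖X‖ := by simp [Finset.sum_const, nsmul_eq_mul]

lemma norm_one_le : ‖(1 : Matrix (Fin d) (Fin d) ℝ)‖ ≤ 1 := by
  rcases Nat.eq_zero_or_pos d with hd | hd
  · subst hd
    have : (1 : Matrix (Fin 0) (Fin 0) ℝ) = 0 := Subsingleton.elim _ _
    simp [this]
  · have h : ‖(1 : Matrix (Fin d) (Fin d) ℝ)‖₊ ≤ 1 := by
      rw [Matrix.linfty_opNNNorm_def]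
      apply Finset.sup_le
      intro k _
      have he : ∀ l, ‖(1 : Matrix (Fin d) (Fin d) ℝ) k l‖₊ = if k = l then 1 else 0 := by
        intro l
        by_cases h : k = l <;> simp [Matrix.one_apply, h]
      rw [Finset.sum_congr rfl fun l _ => he l]
      simp
    exact_mod_cast h

lemma norm_pow_le_mat (X : Matrix (Fin d) (Fin d) ℝ) (n : ℕ) : ‖X ^ n‖ ≤ ‖X‖ ^ n := by
  induction n with
  | zero =>
    rw [pow_zero, pow_zero]
    exact norm_one_le
  | succ n ih =>
    rw [pow_succ, pow_succ]
    calc ‖X ^ n * X‖ ≤ ‖X ^ n‖ * ‖X‖ := norm_mul_le _ _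
      _ ≤ ‖X‖ ^ n * ‖X‖ := by gcongr <;> exact norm_nonneg _

lemma hasDerivAt_matpow {M : ℝ → Matrix (Fin d) (Fin d) ℝ} {D : Matrix (Fin d) (Fin d) ℝ}
    {t : ℝ} (h : HasDerivAt M D t) (n : ℕ) :
    HasDerivAt (fun s => M s ^ n)
      (∑ k ∈ Finset.range n, M t ^ k * D * M t ^ (n - 1 - k)) t := by
  induction n with
  | zero =>
    simp only [pow_zero, Finset.range_zero, Finset.sum_empty]
    exact hasDerivAt_const t (1 : Matrix (Fin d) (Fin d) ℝ)
  | succ n ih =>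
    have h2 := h.fun_mul ih
    have hfun : (fun s => M s * M s ^ n) = fun s => M s ^ (n + 1) := by
      funext s; rw [← pow_succ']
    rw [hfun] at h2
    refine h2.congr_deriv ?_
    symm
    rw [Finset.sum_range_succ']
    simp only [pow_zero, one_mul, Nat.sub_zero, Nat.add_sub_cancel]
    rw [Finset.mul_sum]
    have hterm : ∀ k, M t ^ (k + 1) * D * M t ^ (n + 1 - 1 - (k + 1))
        = M t * (M t ^ k * D * M t ^ (n - 1 - k)) := by
      intro k
      have h1 : n + 1 - 1 - (k + 1) = n - 1 - k := by omega
      rw [h1, pow_succ']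
      noncomm_ring
    calc (∑ k ∈ Finset.range n, M t ^ (k + 1) * D * M t ^ (n + 1 - 1 - (k + 1)))
          + D * M t ^ n
        = (∑ k ∈ Finset.range n, M t * (M t ^ k * D * M t ^ (n - 1 - k))) + D * M t ^ n := by
          congr 1
          exact Finset.sum_congr rfl fun k _ => hterm k
      _ = D * M t ^ n + ∑ k ∈ Finset.range n, M t * (M t ^ k * D * M t ^ (n - 1 - k)) :=
          add_comm _ _

lemma hasDerivAt_trace_pow {M : ℝ → Matrix (Fin d) (Fin d) ℝ} {D : Matrix (Fin d) (Fin d) ℝ}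
    {t : ℝ} (h : HasDerivAt M D t) (n : ℕ) :
    HasDerivAt (fun s => (M s ^ (n + 1)).trace) (((n : ℝ) + 1) * (M t ^ n * D).trace) t := by
  have h1 := (traceCLM d).hasFDerivAt.comp_hasDerivAt t (hasDerivAt_matpow h (n + 1))
  have h2 : HasDerivAt (fun s => (M s ^ (n + 1)).trace)
      ((traceCLM d) (∑ k ∈ Finset.range (n + 1), M t ^ k * D * M t ^ (n + 1 - 1 - k))) t := h1
  convert h2 using 1
  rw [traceCLM_apply, Matrix.trace_sum]
  have hterm : ∀ k ∈ Finset.range (n + 1),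
      (M t ^ k * D * M t ^ (n + 1 - 1 - k)).trace = (M t ^ n * D).trace := by
    intro k hk
    have hkn : k ≤ n := Nat.lt_succ_iff.mp (Finset.mem_range.mp hk)
    have he : n + 1 - 1 - k = n - k := by omega
    rw [he, Matrix.trace_mul_comm, ← Matrix.mul_assoc, ← pow_add, Nat.sub_add_cancel hkn]
  rw [Finset.sum_congr rfl hterm, Finset.sum_const, Finset.card_range, nsmul_eq_mul]
  push_cast
  ring

end Stmt3Aux

open Stmt3Aux

theorem stmt_3 (d : ℕ) (W : Matrix (Fin d) (Fin d) ℝ) (i j : Fin d) :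
    HasDerivAt (fun t : ℝ =>
        (NormedSpace.exp
          ((W + t • Matrix.single i j (1 : ℝ)) ⊙
            (W + t • Matrix.single i j (1 : ℝ)))).trace - (d : ℝ))
      (2 * W i j * NormedSpace.exp (W ⊙ W) j i) 0 := by
  classical
  set E : Matrix (Fin d) (Fin d) ℝ := Matrix.single i j (1 : ℝ) with hE
  set A : Matrix (Fin d) (Fin d) ℝ := W ⊙ W with hA
  set B : Matrix (Fin d) (Fin d) ℝ := W ⊙ E + E ⊙ W with hB
  set C : Matrix (Fin d) (Fin d) ℝ := E ⊙ E with hC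
  set M : ℝ → Matrix (Fin d) (Fin d) ℝ := fun t => A + t • B + (t * t) • C with hM
  set D : ℝ → Matrix (Fin d) (Fin d) ℝ := fun t => B + (2 * t) • C with hD
  -- the Hadamard square along the line equals M
  have hMt : ∀ t : ℝ, (W + t • E) ⊙ (W + t • E) = M t := by
    intro t
    simp only [hM, hB, hC, hA, Matrix.add_hadamard, Matrix.hadamard_add,
      Matrix.smul_hadamard, Matrix.hadamard_smul, smul_smul, smul_add]
    abel
  -- derivative of M
  have hMd : ∀ t : ℝ, HasDerivAt M (D t) t := by
    intro t
    have h1 : HasDerivAt (fun s : ℝ => A + s • B) B t := by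
      have h4 := ((hasDerivAt_id t).smul_const B).const_add A
      rw [one_smul] at h4
      exact h4
    have h2 : HasDerivAt (fun s : ℝ => (s * s) • C) ((2 * t) • C) t := by
      have h3 := ((hasDerivAt_id t).mul (hasDerivAt_id t)).smul_const C
      have he : (1 * id t + id t * 1) = (2 * t : ℝ) := by simp only [id_eq]; ring
      rw [he] at h3
      exact h3
    exact h1.fun_add h2
  -- terms of the series and their derivatives
  set F : ℕ → ℝ → ℝ := fun n t => (((n + 1).factorial : ℝ))⁻¹ * (M t ^ (n + 1)).trace with hF
  set F' : ℕ → ℝ → ℝ := fun n t => ((n.factorial : ℝ))⁻¹ * (M t ^ n * D t).trace with hF'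
  -- the function is the sum of the series F
  have hsum : ∀ t : ℝ, HasSum (fun n => F n t) ((NormedSpace.exp (M t)).trace - d) := by
    intro t
    have h0 : HasSum (fun n : ℕ => ((n.factorial : ℝ))⁻¹ * (M t ^ n).trace)
        ((NormedSpace.exp (M t)).trace) := by
      have h0' := (NormedSpace.exp_series_hasSum_exp' (𝕂 := ℝ) (M t)).mapL (traceCLM d)
      simp [_root_.map_smul, smul_eq_mul] at h0'
      exact h0'
    refine (hasSum_nat_add_iff
      (f := fun n : ℕ => ((n.factorial : ℝ))⁻¹ * (M t ^ n).trace) 1).2 ?_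
    convert h0 using 1
    · rfl
    simp [Matrix.trace_one]
  have hFderiv : ∀ (n : ℕ) (t : ℝ), HasDerivAt (F n) (F' n t) t := by
    intro n t
    have h1 := (hasDerivAt_trace_pow (hMd t) n).const_mul ((((n + 1).factorial : ℝ))⁻¹)
    refine h1.congr_deriv ?_
    symm
    simp only [hF']
    rw [Nat.factorial_succ]
    have hn : ((n : ℝ) + 1) ≠ 0 := by positivity
    have hf : ((n.factorial : ℝ)) ≠ 0 := by exact_mod_cast Nat.factorial_ne_zero n
    push_cast
    field_simp
  -- uniform bounds on the ball of radius 1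
  set R : ℝ := ‖A‖ + ‖B‖ + ‖C‖ with hR
  set R' : ℝ := ‖B‖ + 2 * ‖C‖ with hR'
  have hMbound : ∀ t : ℝ, t ∈ Metric.ball (0 : ℝ) 1 → ‖M t‖ ≤ R := by
    intro t ht
    have ht1 : |t| ≤ 1 := le_of_lt (by simpa [Real.norm_eq_abs] using ht)
    calc ‖M t‖ ≤ ‖A + t • B‖ + ‖(t * t) • C‖ := norm_add_le _ _
      _ ≤ (‖A‖ + ‖t • B‖) + ‖(t * t) • C‖ := by gcongr; exact norm_add_le _ _
      _ = ‖A‖ + |t| * ‖B‖ + |t * t| * ‖C‖ := by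
          rw [norm_smul, norm_smul, Real.norm_eq_abs, Real.norm_eq_abs]; try ring
      _ ≤ ‖A‖ + 1 * ‖B‖ + 1 * ‖C‖ := by
          have hb1 : |t| * ‖B‖ ≤ 1 * ‖B‖ := mul_le_mul_of_nonneg_right ht1 (norm_nonneg _)
          have hc1 : |t * t| * ‖C‖ ≤ 1 * ‖C‖ := by
            apply mul_le_mul_of_nonneg_right _ (norm_nonneg _)
            rw [abs_mul]
            nlinarith [abs_nonneg t]
          linarith
      _ = R := by rw [hR]; ring
  have hDbound : ∀ t : ℝ, t ∈ Metric.ball (0 : ℝ) 1 → ‖D t‖ ≤ R' := by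
    intro t ht
    have ht1 : |t| ≤ 1 := le_of_lt (by simpa [Real.norm_eq_abs] using ht)
    calc ‖D t‖ ≤ ‖B‖ + ‖(2 * t) • C‖ := norm_add_le _ _
      _ = ‖B‖ + |2 * t| * ‖C‖ := by rw [norm_smul, Real.norm_eq_abs]
      _ ≤ ‖B‖ + 2 * ‖C‖ := by
          have h2t : |2 * t| ≤ 2 := by
            rw [abs_mul]
            have : |(2 : ℝ)| = 2 := by norm_num
            rw [this]
            linarith
          have := mul_le_mul_of_nonneg_right h2t (norm_nonneg C)
          linarith
  have hRnonneg : 0 ≤ R := by positivity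
  have hR'nonneg : 0 ≤ R' := by positivity
  have hu_sum : Summable (fun n : ℕ => (d * R') * (R ^ n / n.factorial)) :=
    (Real.summable_pow_div_factorial R).mul_left _
  have hF'bound : ∀ (n : ℕ) (t : ℝ), t ∈ Metric.ball (0 : ℝ) 1 →
      ‖F' n t‖ ≤ (d * R') * (R ^ n / n.factorial) := by
    intro n t ht
    have h1 : ‖(M t ^ n * D t).trace‖ ≤ d * (R ^ n * R') := by
      calc ‖(M t ^ n * D t).trace‖ ≤ d * ‖M t ^ n * D t‖ := trace_norm_le _
        _ ≤ d * (‖M t ^ n‖ * ‖D t‖) := by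
            gcongr
            exact norm_mul_le _ _
        _ ≤ d * (R ^ n * R') := by
            have hp : ‖M t ^ n‖ ≤ R ^ n := by
              refine (norm_pow_le_mat (M t) n).trans ?_
              exact pow_le_pow_left₀ (norm_nonneg _) (hMbound t ht) n
            have hb := hDbound t ht
            have hmm : ‖M t ^ n‖ * ‖D t‖ ≤ R ^ n * R' :=
              mul_le_mul hp hb (norm_nonneg _) (by positivity)
            exact mul_le_mul_of_nonneg_left hmm (Nat.cast_nonneg d)
    have h2 : ‖F' n t‖ = ((n.factorial : ℝ))⁻¹ * ‖(M t ^ n * D t).trace‖ := by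
      simp only [hF', norm_mul, norm_inv, Real.norm_natCast]
    rw [h2, div_eq_mul_inv]
    calc ((n.factorial : ℝ))⁻¹ * ‖(M t ^ n * D t).trace‖
        ≤ ((n.factorial : ℝ))⁻¹ * (d * (R ^ n * R')) := by
          gcongr
      _ = d * R' * (R ^ n * ((n.factorial : ℝ))⁻¹) := by ring
  -- assemble via uniform convergence of derivatives
  have hg : HasDerivAt (fun t => ∑' n, F n t) (∑' n, F' n 0) 0 := by
    refine hasDerivAt_of_tendstoUniformlyOn (f := fun N t => ∑ n ∈ Finset.range N, F n t)
      (f' := fun N t => ∑ n ∈ Finset.range N, F' n t)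
      Metric.isOpen_ball (tendstoUniformlyOn_tsum_nat hu_sum hF'bound) ?_ ?_
      (Metric.mem_ball_self one_pos)
    · refine Filter.Eventually.of_forall fun N t _ => ?_
      exact HasDerivAt.fun_sum fun n _ => hFderiv n t
    · intro t _
      simpa [(hsum t).tsum_eq] using (hsum t).tendsto_sum_nat
  -- identify the function
  have hfun : (fun t : ℝ => (NormedSpace.exp ((W + t • E) ⊙ (W + t • E))).trace - (d : ℝ))
      = fun t => ∑' n, F n t := by
    funext t
    rw [hMt t, ← (hsum t).tsum_eq]
  -- identify the derivative value
  have hM0 : M 0 = A := by simp [hM]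
  have hD0 : D 0 = B := by simp [hD]
  have hF'0 : (fun n : ℕ => F' n 0) = fun n => ((n.factorial : ℝ))⁻¹ * (A ^ n * B).trace := by
    funext n
    simp only [hF', hM0, hD0]
  have hkey : HasSum (fun n : ℕ => ((n.factorial : ℝ))⁻¹ * (A ^ n * B).trace)
      ((NormedSpace.exp A * B).trace) := by
    have h0' := (NormedSpace.exp_series_hasSum_exp' (𝕂 := ℝ) A).mapL
      (LinearMap.toContinuousLinearMap
        ((Matrix.traceLinearMap (Fin d) ℝ ℝ).comp (LinearMap.mulRight ℝ B)))
    simp [LinearMap.coe_toContinuousLinearMap', LinearMap.comp_apply,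
      LinearMap.mulRight_apply, _root_.map_smul, smul_eq_mul, Matrix.smul_mul] at h0'
    exact h0'
  have hB2 : B = (2 * W i j) • E := by
    rw [hB, hE]
    ext k l
    by_cases h1 : i = k
    · by_cases h2 : j = l
      · subst h1; subst h2
        simp [Matrix.hadamard_apply, Matrix.single, Matrix.of_apply, two_mul]
      · simp [Matrix.hadamard_apply, Matrix.single, Matrix.of_apply, h2]
    · simp [Matrix.hadamard_apply, Matrix.single, Matrix.of_apply, h1]
  have htr : ∀ X : Matrix (Fin d) (Fin d) ℝ, (X * E).trace = X j i := by
    intro X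
    rw [Matrix.trace_mul_comm]
    have h : (E * X).trace = ∑ k : Fin d, (E * X) k k := rfl
    have hmain : (E * X) i i = X j i := by
      simp [hE]
    have hzero : ∀ b ∈ Finset.univ, b ≠ i → (E * X) b b = 0 := by
      intro b _ hb
      simp [hE, hb]
    rw [h, Finset.sum_eq_single i hzero (fun hi => absurd (Finset.mem_univ i) hi), hmain]
  have hval : (∑' n, F' n 0) = 2 * W i j * NormedSpace.exp A j i := by
    rw [hF'0, hkey.tsum_eq, hB2, Matrix.mul_smul, Matrix.trace_smul, smul_eq_mul, htr]
  rw [hfun] at *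
  rw [← hval]
  exact hg
end

section
/- For any real $d \times d$ matrix $W$, $h(W) = \mathrm{tr}(\exp(W \odot W)) - d \geq 0$, with equality if and only if the directed graph with adjacency structure given by the nonzero entries of $W$ is acyclic. -/
open Matrix

section Aux

variable {d : ℕ} {A : Matrix (Fin d) (Fin d) ℝ}

lemma aux_pow_entry_nonneg (hA : ∀ i j, 0 ≤ A i j) :
    ∀ (n : ℕ) (i j : Fin d), 0 ≤ (A ^ n) i j := by
  intro n
  induction n with
  | zero =>
    intro i j
    simp only [pow_zero, Matrix.one_apply]
    split <;> norm_num
  | succ n ih =>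
    intro i j
    rw [pow_succ, Matrix.mul_apply]
    exact Finset.sum_nonneg fun z _ => mul_nonneg (ih i z) (hA z j)

lemma aux_path_of_entry_ne_zero (n : ℕ) :
    ∀ i j : Fin d, (A ^ n) i j ≠ 0 →
      ∃ f : ℕ → Fin d, f 0 = i ∧ f n = j ∧ ∀ k < n, A (f k) (f (k + 1)) ≠ 0 := by
  induction n with
  | zero =>
    intro i j h
    have hij : i = j := by
      by_contra hne
      rw [pow_zero, Matrix.one_apply_ne hne] at h
      exact h rfl
    exact ⟨fun _ => i, rfl, hij ▸ rfl, fun k hk => absurd hk (Nat.not_lt_zero k)⟩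
  | succ n ih =>
    intro i j h
    rw [pow_succ, Matrix.mul_apply] at h
    obtain ⟨z, _, hz⟩ := Finset.exists_ne_zero_of_sum_ne_zero h
    have h1 : (A ^ n) i z ≠ 0 := fun h0 => hz (by rw [h0, zero_mul])
    have h2 : A z j ≠ 0 := fun h0 => hz (by rw [h0, mul_zero])
    obtain ⟨f, hf0, hfn, hfe⟩ := ih i z h1
    refine ⟨fun k => if k ≤ n then f k else j, by simpa using hf0, by simp, ?_⟩
    intro k hk
    rcases Nat.lt_succ_iff_lt_or_eq.mp hk with hk' | hk'
    · have h1' : k ≤ n := hk'.le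
      have h2' : k + 1 ≤ n := hk'
      simpa [h1', h2'] using hfe k hk'
    · subst hk'
      simpa [hfn] using h2

lemma aux_prod_le_entry (hA : ∀ i j, 0 ≤ A i j) (n : ℕ) (f : ℕ → Fin d) :
    (∏ k ∈ Finset.range n, A (f k) (f (k + 1))) ≤ (A ^ n) (f 0) (f n) := by
  induction n with
  | zero => simp [Matrix.one_apply]
  | succ n ih =>
    rw [Finset.prod_range_succ, pow_succ, Matrix.mul_apply]
    calc (∏ k ∈ Finset.range n, A (f k) (f (k + 1))) * A (f n) (f (n + 1))
        ≤ (A ^ n) (f 0) (f n) * A (f n) (f (n + 1)) := by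
          apply mul_le_mul_of_nonneg_right ih (hA _ _)
      _ ≤ ∑ z, (A ^ n) (f 0) z * A z (f (n + 1)) := by
          apply Finset.single_le_sum
            (f := fun z => (A ^ n) (f 0) z * A z (f (n + 1)))
            (fun z _ => mul_nonneg (aux_pow_entry_nonneg hA n _ _) (hA _ _))
            (Finset.mem_univ (f n))

end Aux

theorem stmt_4 (d : ℕ) (W : Matrix (Fin d) (Fin d) ℝ) :
    0 ≤ (NormedSpace.exp (W ⊙ W)).trace - (d : ℝ) ∧
    ((NormedSpace.exp (W ⊙ W)).trace - (d : ℝ) = 0 ↔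
      ¬ ∃ (K : ℕ) (f : ℕ → Fin d), 1 ≤ K ∧ f K = f 0 ∧
        ∀ k < K, W (f k) (f (k + 1)) ≠ 0) := by
  set A := W ⊙ W with hAdef
  have hA : ∀ i j, 0 ≤ A i j := fun i j => by
    rw [hAdef, Matrix.hadamard_apply]; exact mul_self_nonneg _
  -- exp as a sum
  have hsum : HasSum (fun n : ℕ => (n.factorial⁻¹ : ℝ) • A ^ n) (NormedSpace.exp A) := by
    letI : SeminormedRing (Matrix (Fin d) (Fin d) ℝ) := Matrix.linftyOpSemiNormedRing
    letI : NormedRing (Matrix (Fin d) (Fin d) ℝ) := Matrix.linftyOpNormedRing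
    letI : NormedAlgebra ℝ (Matrix (Fin d) (Fin d) ℝ) := Matrix.linftyOpNormedAlgebra
    exact NormedSpace.exp_series_hasSum_exp' A
  have htrace_cont : Continuous (Matrix.trace : Matrix (Fin d) (Fin d) ℝ → ℝ) := by
    unfold Matrix.trace
    exact continuous_finset_sum _ fun i _ => (continuous_apply i).comp (continuous_apply i)
  have hsumtr : HasSum (fun n : ℕ => (n.factorial⁻¹ : ℝ) * (A ^ n).trace)
      (NormedSpace.exp A).trace := by
    have := hsum.map (Matrix.traceLinearMap (Fin d) ℝ ℝ).toAddMonoidHom htrace_cont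
    simpa [Function.comp_def, Matrix.trace_smul, smul_eq_mul] using this
  have hc0 : (((0:ℕ).factorial⁻¹ : ℝ) * (A ^ 0).trace) = (d : ℝ) := by
    simp [Matrix.trace_one]
  have hshift : HasSum (fun n : ℕ => ((n + 1).factorial⁻¹ : ℝ) * (A ^ (n + 1)).trace)
      ((NormedSpace.exp A).trace - (d : ℝ)) := by
    have := (hasSum_nat_add_iff' (f := fun n : ℕ => (n.factorial⁻¹ : ℝ) * (A ^ n).trace) 1).mpr
      hsumtr
    simpa [hc0] using this
  have hterm_nonneg : ∀ n : ℕ, 0 ≤ ((n + 1).factorial⁻¹ : ℝ) * (A ^ (n + 1)).trace := by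
    intro n
    apply mul_nonneg (by positivity)
    exact Finset.sum_nonneg fun i _ => aux_pow_entry_nonneg hA _ i i
  have hS : (NormedSpace.exp A).trace - (d : ℝ) =
      ∑' n : ℕ, ((n + 1).factorial⁻¹ : ℝ) * (A ^ (n + 1)).trace := hshift.tsum_eq.symm
  constructor
  · rw [hS]
    exact tsum_nonneg hterm_nonneg
  · constructor
    · -- zero → no cycle
      rintro h0 ⟨K, f, hK1, hKf, hWe⟩
      obtain ⟨K, rfl⟩ : ∃ n, K = n + 1 := ⟨K - 1, (Nat.succ_pred_eq_of_pos hK1).symm⟩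
      have hzero : ∀ n : ℕ, ((n + 1).factorial⁻¹ : ℝ) * (A ^ (n + 1)).trace = 0 := by
        intro n
        have hle : ((n + 1).factorial⁻¹ : ℝ) * (A ^ (n + 1)).trace ≤
            ∑' m : ℕ, ((m + 1).factorial⁻¹ : ℝ) * (A ^ (m + 1)).trace :=
          Summable.le_tsum hshift.summable n fun m _ => hterm_nonneg m
        rw [← hS, h0] at hle
        exact le_antisymm hle (hterm_nonneg n)
      have htr0 : (A ^ (K + 1)).trace = 0 := by
        have := hzero K
        have hfac : ((K + 1).factorial⁻¹ : ℝ) ≠ 0 := by positivity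
        exact (mul_eq_zero.mp this).resolve_left hfac
      -- the cycle gives a positive diagonal entry
      have hprod : 0 < ∏ k ∈ Finset.range (K + 1), A (f k) (f (k + 1)) := by
        apply Finset.prod_pos
        intro k hk
        have hne : A (f k) (f (k + 1)) ≠ 0 := by
          rw [hAdef, Matrix.hadamard_apply]
          exact mul_ne_zero (hWe k (Finset.mem_range.mp hk)) (hWe k (Finset.mem_range.mp hk))
        exact lt_of_le_of_ne (hA _ _) (Ne.symm hne)
      have hdiag : (0:ℝ) < (A ^ (K + 1)) (f 0) (f 0) := by
        have := aux_prod_le_entry hA (K + 1) f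
        rw [hKf] at this
        exact lt_of_lt_of_le hprod this
      have htrge : (A ^ (K + 1)) (f 0) (f 0) ≤ (A ^ (K + 1)).trace := by
        unfold Matrix.trace
        exact Finset.single_le_sum
          (f := fun i => (A ^ (K + 1)) i i)
          (fun i _ => aux_pow_entry_nonneg hA _ i i) (Finset.mem_univ (f 0))
      rw [htr0] at htrge
      exact absurd (lt_of_lt_of_le hdiag htrge) (lt_irrefl 0)
    · -- no cycle → zero
      intro hnc
      rw [hS]
      have : ∀ n : ℕ, ((n + 1).factorial⁻¹ : ℝ) * (A ^ (n + 1)).trace = 0 := by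
        intro n
        rcases eq_or_ne ((A ^ (n + 1)).trace) 0 with h | h
        · rw [h, mul_zero]
        · exfalso
          unfold Matrix.trace at h
          obtain ⟨i, _, hi⟩ := Finset.exists_ne_zero_of_sum_ne_zero h
          obtain ⟨f, hf0, hfn, hfe⟩ := aux_path_of_entry_ne_zero (n + 1) i i hi
          refine hnc ⟨n + 1, f, Nat.le_add_left 1 n, by rw [hf0, hfn], ?_⟩
          intro k hk
          have := hfe k hk
          rw [hAdef, Matrix.hadamard_apply] at this
          exact fun h0 => this (by rw [h0, mul_zero])
      simp only [this, tsum_zero]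
end

section
/- For $d \geq 2$, the set $\mathcal{W}_0$ of real $d \times d$ matrices $W$ with $h(W) = \mathrm{tr}(\exp(W \odot W)) - d = 0$ is not convex: there exist $w, w' \in \mathcal{W}_0$ with $(w + w')/2 \notin \mathcal{W}_0$. -/
open Matrix NormedSpace

lemma aux_exp_sq_zero {d : ℕ} (A : Matrix (Fin d) (Fin d) ℝ) (h : A * A = 0) :
    exp A = 1 + A := by
  rw [exp_eq_tsum (𝕂 := ℝ)]
  show (∑' n : ℕ, ((n.factorial : ℝ))⁻¹ • A ^ n) = 1 + A
  rw [tsum_eq_sum (s := ({0, 1} : Finset ℕ))]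
  · norm_num [Finset.sum_pair (by norm_num : (0:ℕ) ≠ 1)]
  · intro n hn
    obtain ⟨k, rfl⟩ : ∃ k, n = k + 2 := by
      rcases n with _ | _ | n
      · simp at hn
      · simp at hn
      · exact ⟨n, rfl⟩
    rw [pow_add, pow_two, h, mul_zero, smul_zero]

lemma aux_hasSum_trace_exp {d : ℕ} (A : Matrix (Fin d) (Fin d) ℝ) :
    HasSum (fun n : ℕ => ((n.factorial : ℝ))⁻¹ * (A ^ n).trace) ((exp A).trace) := by
  letI : SeminormedRing (Matrix (Fin d) (Fin d) ℝ) := Matrix.linftyOpSemiNormedRing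
  letI : NormedRing (Matrix (Fin d) (Fin d) ℝ) := Matrix.linftyOpNormedRing
  letI : NormedAlgebra ℝ (Matrix (Fin d) (Fin d) ℝ) := Matrix.linftyOpNormedAlgebra
  have hs : Summable fun n : ℕ => ((n.factorial : ℝ))⁻¹ • A ^ n := expSeries_summable' A
  have hcont : Continuous (Matrix.traceLinearMap (Fin d) ℝ ℝ) := by
    show Continuous fun M : Matrix (Fin d) (Fin d) ℝ => M.trace
    unfold Matrix.trace Matrix.diag
    exact continuous_finset_sum _ fun i _ =>
      (continuous_apply i).comp (continuous_apply i)
  have h2 := (hs.hasSum.map (Matrix.traceLinearMap (Fin d) ℝ ℝ) hcont)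
  rw [exp_eq_tsum (𝕂 := ℝ)]
  show HasSum _ ((∑' n : ℕ, ((n.factorial : ℝ))⁻¹ • A ^ n).trace)
  have he : (⇑(Matrix.traceLinearMap (Fin d) ℝ ℝ) ∘ fun n : ℕ => ((n.factorial : ℝ))⁻¹ • A ^ n)
      = fun n : ℕ => ((n.factorial : ℝ))⁻¹ * (A ^ n).trace := by
    funext n
    simp [Matrix.trace_smul, smul_eq_mul]
  rwa [he] at h2

theorem stmt_6 (d : ℕ) (hd : 2 ≤ d) :
    ∃ w w' : Matrix (Fin d) (Fin d) ℝ,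
      (NormedSpace.exp (w ⊙ w)).trace - (d : ℝ) = 0 ∧
      (NormedSpace.exp (w' ⊙ w')).trace - (d : ℝ) = 0 ∧
      (NormedSpace.exp (((2 : ℝ)⁻¹ • (w + w')) ⊙ ((2 : ℝ)⁻¹ • (w + w')))).trace - (d : ℝ) ≠ 0 := by
  set i : Fin d := ⟨0, by omega⟩ with hi
  set j : Fin d := ⟨1, by omega⟩ with hj
  have hij : i ≠ j := by simp [hi, hj, Fin.ext_iff]
  have hji : j ≠ i := hij.symm
  set w : Matrix (Fin d) (Fin d) ℝ := Matrix.single i j 1 with hw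
  set w' : Matrix (Fin d) (Fin d) ℝ := Matrix.single j i 1 with hw'
  refine ⟨w, w', ?_, ?_, ?_⟩
  · have h1 : w ⊙ w = w := by
      ext a b
      simp only [Matrix.hadamard_apply, hw, Matrix.single, Matrix.of_apply]
      split_ifs <;> norm_num
    have h2 : w * w = 0 := Matrix.single_mul_single_of_ne (c := (1:ℝ)) i j i hji (1:ℝ)
    rw [h1, aux_exp_sq_zero w h2, Matrix.trace_add, Matrix.trace_one,
      Matrix.trace_single_eq_of_ne i j (1:ℝ) hij]
    simp
  · have h1 : w' ⊙ w' = w' := by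
      ext a b
      simp only [Matrix.hadamard_apply, hw', Matrix.single, Matrix.of_apply]
      split_ifs <;> norm_num
    have h2 : w' * w' = 0 := Matrix.single_mul_single_of_ne (c := (1:ℝ)) j i j hij (1:ℝ)
    rw [h1, aux_exp_sq_zero w' h2, Matrix.trace_add, Matrix.trace_one,
      Matrix.trace_single_eq_of_ne j i (1:ℝ) hji]
    simp
  · set S : Matrix (Fin d) (Fin d) ℝ := w + w' with hS
    set P : Matrix (Fin d) (Fin d) ℝ :=
      Matrix.single i i 1 + Matrix.single j j 1 with hP
    have hM : ((2 : ℝ)⁻¹ • (w + w')) ⊙ ((2 : ℝ)⁻¹ • (w + w')) = (4 : ℝ)⁻¹ • S := by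
      ext a b
      simp only [Matrix.hadamard_apply, Matrix.smul_apply, Matrix.add_apply, hS, hw, hw',
        Matrix.single, Matrix.of_apply, smul_eq_mul]
      split_ifs with hab hcd hcd
      · exact absurd (hab.1.trans hcd.1.symm) hij
      · ring
      · ring
      · ring
    have hS2 : S * S = P := by
      rw [hS, hP, hw, hw']
      simp [add_mul, mul_add, hij, hji]
      abel
    have hSP : S * P = S := by
      rw [hS, hP, hw, hw']
      simp [add_mul, mul_add, hij, hji]
      abel
    have hPP : P * P = P := by
      rw [hP]
      simp [add_mul, mul_add, hij, hji]
      try abel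
    have key : ∀ n : ℕ, S ^ (2 * n + 1) = S ∧ S ^ (2 * n + 2) = P := by
      intro n
      induction n with
      | zero => exact ⟨pow_one S, by rw [pow_two, hS2]⟩
      | succ k ih =>
        constructor
        · have : 2 * (k + 1) + 1 = (2 * k + 1) + 2 := by ring
          rw [this, pow_add, pow_two, hS2, ih.1, hSP]
        · have : 2 * (k + 1) + 2 = (2 * k + 2) + 2 := by ring
          rw [this, pow_add, pow_two, hS2, ih.2, hPP]
    have htrS : (S).trace = 0 := by
      rw [hS, hw, hw', Matrix.trace_add,
        Matrix.trace_single_eq_of_ne i j (1:ℝ) hij,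
        Matrix.trace_single_eq_of_ne j i (1:ℝ) hji, add_zero]
    have htrP : (P).trace = 2 := by
      rw [hP, Matrix.trace_add, Matrix.trace_single_eq_same, Matrix.trace_single_eq_same]
      norm_num
    have htr_nonneg : ∀ n : ℕ, 0 ≤ (S ^ n).trace := by
      intro n
      rcases Nat.even_or_odd n with ⟨k, hk⟩ | ⟨k, hk⟩
      · rcases Nat.eq_zero_or_pos k with rfl | hkpos
        · subst hk
          simp [Matrix.trace_one]
        · obtain ⟨k', rfl⟩ : ∃ k', k = k' + 1 := ⟨k - 1, by omega⟩
          have : n = 2 * k' + 2 := by omega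
          rw [this, (key k').2, htrP]
          norm_num
      · have : n = 2 * k + 1 := by omega
        rw [this, (key k).1, htrS]
    set M : Matrix (Fin d) (Fin d) ℝ := (4 : ℝ)⁻¹ • S with hMdef
    have hterm : ∀ n : ℕ, ((n.factorial : ℝ))⁻¹ * ((M ^ n).trace)
        = ((n.factorial : ℝ))⁻¹ * ((4 : ℝ)⁻¹) ^ n * (S ^ n).trace := by
      intro n
      rw [hMdef, smul_pow, Matrix.trace_smul, smul_eq_mul]
      ring
    have hsum := aux_hasSum_trace_exp M
    have hnn : ∀ n : ℕ, 0 ≤ ((n.factorial : ℝ))⁻¹ * ((M ^ n).trace) := by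
      intro n
      rw [hterm n]
      have : (0:ℝ) ≤ ((n.factorial : ℝ))⁻¹ * ((4 : ℝ)⁻¹) ^ n := by positivity
      exact mul_nonneg this (htr_nonneg n)
    have hle : ∑ n ∈ ({0, 2} : Finset ℕ), ((n.factorial : ℝ))⁻¹ * ((M ^ n).trace)
        ≤ (exp M).trace := by
      refine Summable.sum_le_tsum _ (fun n _ => hnn n) hsum.summable |>.trans_eq hsum.tsum_eq
    have hval : ∑ n ∈ ({0, 2} : Finset ℕ), ((n.factorial : ℝ))⁻¹ * ((M ^ n).trace)
        = (d : ℝ) + 16⁻¹ := by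
      rw [Finset.sum_pair (by norm_num : (0:ℕ) ≠ 2)]
      rw [hterm 0, hterm 2, pow_zero, (key 0).2, htrP]
      simp [Matrix.trace_one, Nat.factorial]
      norm_num
    rw [hM]
    intro hzero
    have : (exp M).trace = (d : ℝ) := by linarith
    rw [this] at hle
    rw [hval] at hle
    norm_num at hle
end

section
/- Let $W$ be a real $d\times d$ matrix and $h(W) = \mathrm{tr}(\exp(W\odot W)) - d$. Then $h(W) = 0$ if and only if $\nabla h(W) = 0$, where $\nabla h(W) = 2 W \odot (\exp(W\odot W))^\top$. -/
open Matrix Nat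

private lemma tsum_zero_term {f : ℕ → ℝ} (hf : Summable f) (h0 : ∀ n, 0 ≤ f n)
    (hz : ∑' n, f n = 0) (k : ℕ) : f k = 0 := by
  by_contra hk
  have hpos : 0 < f k := lt_of_le_of_ne (h0 k) (Ne.symm hk)
  have := Summable.tsum_pos hf h0 k hpos
  linarith [hz ▸ this]

theorem stmt_9 (d : ℕ) (W : Matrix (Fin d) (Fin d) ℝ) :
    (NormedSpace.exp (W ⊙ W)).trace - (d : ℝ) = 0 ↔
      (2 : ℝ) • (W ⊙ (NormedSpace.exp (W ⊙ W))ᵀ) = 0 := by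
  classical
  set A : Matrix (Fin d) (Fin d) ℝ := W ⊙ W with hAdef
  have hAentry : ∀ i j, A i j = W i j * W i j := fun i j => rfl
  have hA0 : ∀ i j, 0 ≤ A i j := fun i j => (hAentry i j) ▸ mul_self_nonneg _
  -- nonnegativity of entries of powers
  have hpow0 : ∀ (n : ℕ) (i j : Fin d), 0 ≤ (A ^ n) i j := by
    intro n
    induction n with
    | zero =>
      intro i j
      rw [pow_zero]
      by_cases h : i = j
      · subst h; simp [Matrix.one_apply_eq]
      · simp [Matrix.one_apply_ne h]
    | succ n ih =>
      intro i j
      rw [_root_.pow_succ', Matrix.mul_apply]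
      exact Finset.sum_nonneg fun k _ => mul_nonneg (hA0 i k) (ih k j)
  -- summability of the exponential series in the matrix algebra
  letI : SeminormedRing (Matrix (Fin d) (Fin d) ℝ) := Matrix.linftyOpSemiNormedRing
  letI : NormedRing (Matrix (Fin d) (Fin d) ℝ) := Matrix.linftyOpNormedRing
  letI : NormedAlgebra ℝ (Matrix (Fin d) (Fin d) ℝ) := Matrix.linftyOpNormedAlgebra
  have hsum : Summable fun n : ℕ => ((n ! : ℝ))⁻¹ • A ^ n :=
    NormedSpace.expSeries_summable' (𝕂 := ℝ) A
  -- the entry evaluation continuous linear map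
  obtain ⟨entryCLM, entryCLM_apply⟩ :
      ∃ f : Fin d → Fin d → (Matrix (Fin d) (Fin d) ℝ →L[ℝ] ℝ),
        ∀ (i j : Fin d) (M : Matrix (Fin d) (Fin d) ℝ), f i j M = M i j :=
    ⟨fun i j => LinearMap.toContinuousLinearMap
      { toFun := fun M => M i j
        map_add' := fun _ _ => rfl
        map_smul' := fun _ _ => rfl }, fun _ _ _ => rfl⟩
  have hsum_entry : ∀ i j : Fin d, Summable fun n : ℕ => ((n ! : ℝ))⁻¹ * (A ^ n) i j := by
    intro i j
    have h1 := hsum.map (entryCLM i j) (entryCLM i j).continuous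
    have h2 : (⇑(entryCLM i j) ∘ fun n : ℕ => ((n ! : ℝ))⁻¹ • A ^ n) =
        fun n : ℕ => ((n ! : ℝ))⁻¹ * (A ^ n) i j := by
      funext n
      simp [Function.comp, entryCLM_apply, Matrix.smul_apply, smul_eq_mul]
    rwa [h2] at h1
  have hexp_entry : ∀ i j : Fin d,
      (NormedSpace.exp A) i j = ∑' n : ℕ, ((n ! : ℝ))⁻¹ * (A ^ n) i j := by
    intro i j
    have h1 : (entryCLM i j) (NormedSpace.exp A) =
        ∑' n : ℕ, (entryCLM i j) (((n ! : ℝ))⁻¹ • A ^ n) := by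
      rw [NormedSpace.exp_eq_tsum (𝕂 := ℝ)]
      exact ContinuousLinearMap.map_tsum _ hsum
    simpa [entryCLM_apply, Matrix.smul_apply, smul_eq_mul] using h1
  have hterm0 : ∀ (i j : Fin d) (n : ℕ), 0 ≤ ((n ! : ℝ))⁻¹ * (A ^ n) i j :=
    fun i j n => mul_nonneg (inv_nonneg.2 (Nat.cast_nonneg _)) (hpow0 n i j)
  -- exp entry nonneg
  have hexp0 : ∀ i j : Fin d, 0 ≤ (NormedSpace.exp A) i j := by
    intro i j
    rw [hexp_entry]
    exact tsum_nonneg (hterm0 i j)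
  -- key characterization: exp entry is zero iff all power entries are zero
  have hexp_zero_iff : ∀ i j : Fin d,
      (NormedSpace.exp A) i j = 0 ↔ ∀ n : ℕ, (A ^ n) i j = 0 := by
    intro i j
    constructor
    · intro h n
      rw [hexp_entry] at h
      have := tsum_zero_term (hsum_entry i j) (hterm0 i j) h n
      have hfac : ((n ! : ℝ))⁻¹ ≠ 0 := inv_ne_zero (Nat.cast_ne_zero.2 (Nat.factorial_ne_zero n))
      exact (mul_eq_zero.1 this).resolve_left hfac
    · intro h
      rw [hexp_entry]
      simp [h]
  -- condition P : all diagonal entries of positive powers vanish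
  -- condition Q : ∀ i j, W i j * exp(A) j i = 0
  have hPQ : (∀ (i : Fin d) (n : ℕ), (A ^ (n + 1)) i i = 0) ↔
      (∀ i j : Fin d, W i j * (NormedSpace.exp A) j i = 0) := by
    constructor
    · intro hP i j
      by_cases hW : W i j = 0
      · rw [hW, zero_mul]
      · have hAij : 0 < A i j := by
          rw [hAentry]
          exact mul_self_pos.2 hW
        have hzero : ∀ n : ℕ, (A ^ n) j i = 0 := by
          intro n
          have hsum' : (A ^ (n + 1)) i i = ∑ k, A i k * (A ^ n) k i := by
            rw [_root_.pow_succ', Matrix.mul_apply]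
          have hle : A i j * (A ^ n) j i ≤ (A ^ (n + 1)) i i := by
            rw [hsum']
            exact Finset.single_le_sum
              (fun k _ => mul_nonneg (hA0 i k) (hpow0 n k i)) (Finset.mem_univ j)
          have hge : 0 ≤ A i j * (A ^ n) j i := mul_nonneg (hA0 i j) (hpow0 n j i)
          have : A i j * (A ^ n) j i = 0 := le_antisymm (by rw [hP i n] at hle; exact hle) hge
          exact (mul_eq_zero.1 this).resolve_left (ne_of_gt hAij)
        rw [(hexp_zero_iff j i).2 hzero, mul_zero]
    · intro hQ i n
      rw [_root_.pow_succ', Matrix.mul_apply]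
      apply Finset.sum_eq_zero
      intro j _
      by_cases hW : W i j = 0
      · rw [hAentry, hW, zero_mul, zero_mul]
      · have hexpz : (NormedSpace.exp A) j i = 0 :=
          (mul_eq_zero.1 (hQ i j)).resolve_left hW
        rw [(hexp_zero_iff j i).1 hexpz n, mul_zero]
  -- rewrite the RHS of the statement
  have hRHS : ((2 : ℝ) • (W ⊙ (NormedSpace.exp A)ᵀ) = 0) ↔
      (∀ i j : Fin d, W i j * (NormedSpace.exp A) j i = 0) := by
    constructor
    · intro h i j
      have := congrArg (fun M => M i j) h
      simp only [Matrix.smul_apply, Matrix.hadamard_apply, Matrix.transpose_apply,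
        Matrix.zero_apply, smul_eq_mul] at this
      have h2 : (2 : ℝ) ≠ 0 := two_ne_zero
      exact (mul_eq_zero.1 this).resolve_left h2
    · intro h
      ext i j
      simp only [Matrix.smul_apply, Matrix.hadamard_apply, Matrix.transpose_apply,
        Matrix.zero_apply, smul_eq_mul, h i j, mul_zero]
  -- rewrite the LHS of the statement
  have hdiag : ∀ i : Fin d, (NormedSpace.exp A) i i =
      1 + ∑' n : ℕ, (((n + 1) ! : ℝ))⁻¹ * (A ^ (n + 1)) i i := by
    intro i
    rw [hexp_entry i i, Summable.tsum_eq_zero_add (hsum_entry i i)]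
    congr 1
    simp [Matrix.one_apply_eq]
  have hsum_shift : ∀ i : Fin d,
      Summable fun n : ℕ => (((n + 1) ! : ℝ))⁻¹ * (A ^ (n + 1)) i i := by
    intro i
    exact (hsum_entry i i).comp_injective (add_left_injective 1)
  have hLHS : ((NormedSpace.exp A).trace - (d : ℝ) = 0) ↔
      (∀ (i : Fin d) (n : ℕ), (A ^ (n + 1)) i i = 0) := by
    have htr : (NormedSpace.exp A).trace =
        (d : ℝ) + ∑ i : Fin d, ∑' n : ℕ, (((n + 1) ! : ℝ))⁻¹ * (A ^ (n + 1)) i i := by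
      unfold Matrix.trace
      simp only [Matrix.diag]
      rw [show (∑ i : Fin d, (NormedSpace.exp A) i i) =
          ∑ i : Fin d, (1 + ∑' n : ℕ, (((n + 1) ! : ℝ))⁻¹ * (A ^ (n + 1)) i i) from
        Finset.sum_congr rfl fun i _ => hdiag i]
      rw [Finset.sum_add_distrib]
      simp
    rw [htr]
    constructor
    · intro h i n
      have hz : ∑ i : Fin d, ∑' n : ℕ, (((n + 1) ! : ℝ))⁻¹ * (A ^ (n + 1)) i i = 0 := by
        linarith
      have hnn : ∀ i : Fin d, 0 ≤ ∑' n : ℕ, (((n + 1) ! : ℝ))⁻¹ * (A ^ (n + 1)) i i :=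
        fun i => tsum_nonneg fun n => hterm0 i i (n + 1)
      have hi0 : ∑' n : ℕ, (((n + 1) ! : ℝ))⁻¹ * (A ^ (n + 1)) i i = 0 :=
        (Finset.sum_eq_zero_iff_of_nonneg (fun i _ => hnn i)).1 hz i (Finset.mem_univ i)
      have := tsum_zero_term (hsum_shift i) (fun n => hterm0 i i (n + 1)) hi0 n
      have hfac : (((n + 1) ! : ℝ))⁻¹ ≠ 0 :=
        inv_ne_zero (Nat.cast_ne_zero.2 (Nat.factorial_ne_zero _))
      exact (mul_eq_zero.1 this).resolve_left hfac
    · intro h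
      have : ∀ i : Fin d, ∑' n : ℕ, (((n + 1) ! : ℝ))⁻¹ * (A ^ (n + 1)) i i = 0 := by
        intro i
        have : ∀ n : ℕ, (((n + 1) ! : ℝ))⁻¹ * (A ^ (n + 1)) i i = 0 := by
          intro n; rw [h i n, mul_zero]
        simp [this]
      rw [Finset.sum_congr rfl fun i _ => this i]
      simp
  rw [hLHS, hRHS]
  exact hPQ
end

section
/- If $W$ is a real $d \times d$ matrix that is permutation-similar to a strictly upper triangular matrix, then $W \odot (\exp(W \odot W))^\top = 0$. -/
open Matrix

private lemma pow_entry_aux {d : ℕ} (M : Matrix (Fin d) (Fin d) ℝ)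
    (σ : Equiv.Perm (Fin d)) (hM : ∀ i j, ¬ σ i < σ j → M i j = 0) :
    ∀ n a b, (M ^ n) a b ≠ 0 → (σ a : ℕ) + n ≤ (σ b : ℕ) := by
  intro n
  induction n with
  | zero =>
    intro a b h
    rcases eq_or_ne a b with rfl | hab
    · simp
    · exact absurd (by simp [Matrix.one_apply_ne hab]) h
  | succ n ih =>
    intro a b h
    rw [pow_succ', Matrix.mul_apply] at h
    obtain ⟨c, hc⟩ := Finset.exists_ne_zero_of_sum_ne_zero h
    have h1 : M a c ≠ 0 := fun h0 => hc.2 (by simp [h0])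
    have h2 : (M ^ n) c b ≠ 0 := fun h0 => hc.2 (by simp [h0])
    have hac : σ a < σ c := by by_contra hlt; exact h1 (hM a c hlt)
    have := ih c b h2
    have : (σ a : ℕ) < (σ c : ℕ) := hac
    omega

theorem stmt_11 (d : ℕ) (W : Matrix (Fin d) (Fin d) ℝ)
    (hperm : ∃ σ : Equiv.Perm (Fin d), ∀ i j, ¬ σ i < σ j → W i j = 0) :
    W ⊙ (NormedSpace.exp (W ⊙ W))ᵀ = 0 := by
  obtain ⟨σ, hσ⟩ := hperm
  set M := W ⊙ W with hMdef
  have hM : ∀ i j, ¬ σ i < σ j → M i j = 0 := by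
    intro i j h
    simp [hMdef, Matrix.hadamard_apply, hσ i j h]
  have key := pow_entry_aux M σ hM
  have hMd : ∀ n, d ≤ n → M ^ n = 0 := by
    intro n hn
    ext a b
    by_contra h
    have := key n a b h
    have hb : (σ b : ℕ) < d := (σ b).isLt
    omega
  have hexp : NormedSpace.exp M = ∑ n ∈ Finset.range d, ((n.factorial : ℝ)⁻¹) • M ^ n := by
    rw [NormedSpace.exp_eq_tsum ℝ]
    exact tsum_eq_sum (by
      intro n hn
      rw [Finset.mem_range, not_lt] at hn
      rw [hMd n hn, smul_zero])
  ext i j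
  simp only [Matrix.hadamard_apply, Matrix.transpose_apply, Matrix.zero_apply]
  rcases Classical.em (σ i < σ j) with hij | hij
  · have hentry : ∀ n : ℕ, (M ^ n) j i = 0 := by
      intro n
      by_contra h
      have := key n j i h
      have h1 : (σ i : ℕ) < (σ j : ℕ) := hij
      omega
    have : NormedSpace.exp M j i = 0 := by
      rw [hexp, Matrix.sum_apply]
      exact Finset.sum_eq_zero fun n _ => by simp [hentry n]
    rw [this, mul_zero]
  · rw [hσ i j hij, zero_mul]
end

section
/- For a real $d\times d$ matrix $W$ whose directed graph is acyclic, $\mathrm{tr}((W \odot W)^k) = 0$ for all $k \geq 1$, and hence $h(W) = \mathrm{tr}(\exp(W\odot W)) - d = 0$. -/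
open Matrix

lemma walk_of_pow_ne {d : ℕ} (A : Matrix (Fin d) (Fin d) ℝ) :
    ∀ (k : ℕ) (i j : Fin d), (A ^ k) i j ≠ 0 →
      ∃ f : ℕ → Fin d, f 0 = i ∧ f k = j ∧ ∀ m < k, A (f m) (f (m + 1)) ≠ 0 := by
  intro k
  induction k with
  | zero =>
    intro i j h
    rw [pow_zero, Matrix.one_apply] at h
    have hij : i = j := by by_contra hne; simp [hne] at h
    exact ⟨fun _ => i, rfl, hij ▸ rfl, fun m hm => absurd hm (Nat.not_lt_zero m)⟩
  | succ k ih =>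
    intro i j h
    rw [pow_succ, Matrix.mul_apply] at h
    obtain ⟨l, -, hl⟩ : ∃ l ∈ Finset.univ, (A ^ k) i l * A l j ≠ 0 := by
      by_contra hc
      push_neg at hc
      exact h (Finset.sum_eq_zero hc)
    obtain ⟨f, hf0, hfk, hfs⟩ := ih i l (left_ne_zero_of_mul hl)
    refine ⟨Function.update f (k + 1) j, ?_, ?_, ?_⟩
    · rw [Function.update_of_ne (by omega), hf0]
    · simp [Function.update_self]
    · intro m hm
      rcases Nat.lt_succ_iff_lt_or_eq.mp hm with hm' | rfl
      · rw [Function.update_of_ne (by omega), Function.update_of_ne (by omega)]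
        exact hfs m hm'
      · rw [Function.update_of_ne (by omega), Function.update_self, hfk]
        exact right_ne_zero_of_mul hl

theorem stmt_12 (d : ℕ) (W : Matrix (Fin d) (Fin d) ℝ)
    (hacyc : ¬ ∃ (K : ℕ) (f : ℕ → Fin d), 1 ≤ K ∧ f K = f 0 ∧
      ∀ k < K, W (f k) (f (k + 1)) ≠ 0) :
    (∀ k : ℕ, 1 ≤ k → ((W ⊙ W) ^ k).trace = 0) ∧
      (NormedSpace.exp (W ⊙ W)).trace - (d : ℝ) = 0 := by
  set A := W ⊙ W with hA
  have hAW : ∀ i j, A i j ≠ 0 → W i j ≠ 0 := by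
    intro i j h hw
    exact h (by simp [hA, Matrix.hadamard, hw])
  -- diagonal entries of powers vanish
  have hdiag : ∀ k : ℕ, 1 ≤ k → ∀ i, (A ^ k) i i = 0 := by
    intro k hk i
    by_contra h
    obtain ⟨f, hf0, hfk, hfs⟩ := walk_of_pow_ne A k i i h
    exact hacyc ⟨k, f, hk, by rw [hf0, hfk], fun m hm => hAW _ _ (hfs m hm)⟩
  have htr : ∀ k : ℕ, 1 ≤ k → (A ^ k).trace = 0 := by
    intro k hk
    rw [Matrix.trace]
    exact Finset.sum_eq_zero fun i _ => hdiag k hk i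
  refine ⟨htr, ?_⟩
  -- powers ≥ d vanish entirely (pigeonhole)
  have hpow : ∀ n : ℕ, d ≤ n → A ^ n = 0 := by
    intro n hn
    ext i j
    by_contra h
    obtain ⟨f, hf0, hfk, hfs⟩ := walk_of_pow_ne A n i j h
    have : ∃ a ∈ Finset.range (n + 1), ∃ b ∈ Finset.range (n + 1), a ≠ b ∧ f a = f b := by
      apply Finset.exists_ne_map_eq_of_card_lt_of_maps_to (t := (Finset.univ : Finset (Fin d)))
      · simpa using by omega
      · intro a _; exact Finset.mem_univ _
    obtain ⟨a, ha, b, hb, hab, hfab⟩ := this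
    simp only [Finset.mem_range] at ha hb
    -- wlog a < b
    rcases Nat.lt_or_ge a b with hlt | hge
    · exact hacyc ⟨b - a, fun m => f (a + m), by omega,
        by simp only [Nat.add_sub_cancel' (le_of_lt hlt), Nat.add_zero]; exact hfab.symm,
        fun m hm => by
          have h1 : a + m < n := by omega
          show W (f (a + m)) (f (a + (m + 1))) ≠ 0
          rw [← Nat.add_assoc]
          exact hAW _ _ (hfs (a + m) h1)⟩
    · have hlt : b < a := by omega
      exact hacyc ⟨a - b, fun m => f (b + m), by omega,
        by simp only [Nat.add_sub_cancel' (le_of_lt hlt), Nat.add_zero]; exact hfab,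
        fun m hm => by
          have h1 : b + m < n := by omega
          show W (f (b + m)) (f (b + (m + 1))) ≠ 0
          rw [← Nat.add_assoc]
          exact hAW _ _ (hfs (b + m) h1)⟩
  have hexp : NormedSpace.exp A = ∑ n ∈ Finset.range (d + 1), ((Nat.factorial n : ℝ)⁻¹) • A ^ n := by
    rw [NormedSpace.exp_eq_tsum (𝕂 := ℝ)]
    refine tsum_eq_sum fun n hn => ?_
    have hdn : d ≤ n := by
      by_contra hc
      exact hn (Finset.mem_range.mpr (by omega))
    rw [hpow n hdn, smul_zero]
  rw [hexp, Matrix.trace_sum]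
  have : ∀ n ∈ Finset.range (d + 1), n ≠ 0 → (((Nat.factorial n : ℝ)⁻¹) • A ^ n).trace = 0 := by
    intro n _ hn
    rw [Matrix.trace_smul, htr n (by omega), smul_zero]
  rw [Finset.sum_eq_single 0 this (fun h => absurd (Finset.mem_range.mpr (by omega)) h)]
  simp [Matrix.trace_one]
end

section
/- Let $W$ be a real $d\times d$ matrix with $d \geq 2$, $Z$ the diagonal matrix with $Z_{11}=0$ and $Z_{ii}=1$ for $i>1$, and suppose $I - ZW^\top$ is invertible. Let $\tilde\varepsilon$ be a random vector with zero mean and diagonal covariance $\tilde\Sigma$ with $\tilde\Sigma_{11} > 0$, and define $v = (I - ZW^\top)^{-1}\tilde\varepsilon$. Then $\mathrm{Cov}(v_1, v_2)/\mathrm{Var}(v_1) = [(I - ZW^\top)^{-1}]_{21}$. -/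
open Matrix MeasureTheory

theorem stmt_17 (d : ℕ) (W Z : Matrix (Fin (d + 2)) (Fin (d + 2)) ℝ)
    (hZ : Z = Matrix.diagonal (fun i => if i = 0 then (0 : ℝ) else 1))
    (hinv : IsUnit (1 - Z * Wᵀ))
    {Ω : Type*} [MeasurableSpace Ω] (μ : Measure Ω) [IsProbabilityMeasure μ]
    (eps : Ω → Fin (d + 2) → ℝ)
    (hint : ∀ i j : Fin (d + 2), Integrable (fun ω => eps ω i * eps ω j) μ)
    (hint1 : ∀ i : Fin (d + 2), Integrable (fun ω => eps ω i) μ)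
    (hmean : ∀ i : Fin (d + 2), ∫ ω, eps ω i ∂μ = 0)
    (hdiag : ∀ i j : Fin (d + 2), i ≠ j → ∫ ω, eps ω i * eps ω j ∂μ = 0)
    (hvar : 0 < ∫ ω, eps ω 0 * eps ω 0 ∂μ)
    (v : Ω → Fin (d + 2) → ℝ)
    (hv : ∀ ω, v ω = (1 - Z * Wᵀ)⁻¹ *ᵥ eps ω) :
    ((∫ ω, v ω 0 * v ω 1 ∂μ) - (∫ ω, v ω 0 ∂μ) * ∫ ω, v ω 1 ∂μ) /
        ((∫ ω, v ω 0 * v ω 0 ∂μ) - (∫ ω, v ω 0 ∂μ) ^ 2) =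
      (1 - Z * Wᵀ)⁻¹ 1 0 := by
  set A := 1 - Z * Wᵀ with hA
  set M := A⁻¹ with hM
  have hdet : IsUnit A.det := (Matrix.isUnit_iff_isUnit_det A).mp hinv
  -- row 0 of A is e₀
  have hArow : ∀ j, A 0 j = if (0 : Fin (d+2)) = j then 1 else 0 := by
    intro j
    have hZrow : ∀ k, Z 0 k = 0 := by
      intro k
      simp [hZ, Matrix.diagonal_apply]
    simp [hA, Matrix.sub_apply, Matrix.mul_apply, hZrow, Matrix.one_apply]
  -- row 0 of M is e₀
  have hMrow : ∀ j, M 0 j = if j = 0 then 1 else 0 := by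
    intro j
    have h1 : A * M = 1 := Matrix.mul_nonsing_inv A hdet
    have := congrFun (congrFun h1 0) j
    rw [Matrix.mul_apply] at this
    have hs : ∑ k, A 0 k * M k j = M 0 j := by
      rw [Finset.sum_eq_single 0]
      · simp [hArow]
      · intro b _ hb; simp [hArow, Ne.symm hb]
      · simp
    rw [hs] at this
    rw [this, Matrix.one_apply]
    by_cases h : j = 0 <;> simp [h, eq_comm]
  have hv0 : ∀ ω, v ω 0 = eps ω 0 := by
    intro ω
    rw [hv ω]
    simp only [Matrix.mulVec, dotProduct]
    rw [Finset.sum_eq_single 0]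
    · simp [hMrow]
    · intro b _ hb; simp [hMrow, hb]
    · simp
  have hv1 : ∀ ω, v ω 1 = ∑ j, M 1 j * eps ω j := by
    intro ω; rw [hv ω]; rfl
  set S := ∫ ω, eps ω 0 * eps ω 0 ∂μ with hS
  have hI1 : (∫ ω, v ω 0 * v ω 1 ∂μ) = M 1 0 * S := by
    have : (fun ω => v ω 0 * v ω 1) = fun ω => ∑ j, M 1 j * (eps ω 0 * eps ω j) := by
      funext ω
      rw [hv0, hv1, Finset.mul_sum]
      congr 1; funext j; ring
    rw [this, integral_finset_sum]
    · rw [Finset.sum_eq_single 0]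
      · rw [integral_const_mul]
      · intro b _ hb
        rw [integral_const_mul, hdiag 0 b (Ne.symm hb), mul_zero]
      · simp
    · intro j _
      exact (hint 0 j).const_mul _
  have hm0 : (∫ ω, v ω 0 ∂μ) = 0 := by
    rw [show (fun ω => v ω 0) = fun ω => eps ω 0 from funext hv0]
    exact hmean 0
  have hI0 : (∫ ω, v ω 0 * v ω 0 ∂μ) = S := by
    rw [show (fun ω => v ω 0 * v ω 0) = fun ω => eps ω 0 * eps ω 0 by
      funext ω; rw [hv0]]
  rw [hI1, hm0, hI0]
  rw [zero_mul, sub_zero, zero_pow two_ne_zero, sub_zero, mul_div_assoc, div_self (ne_of_gt hvar), mul_one]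
end
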